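/- Let I ⊆ ℝ be an open interval and let β : ℝ → ℝ be twice differentiable on I with β(z) > 0 for every z ∈ I. Then β(z)·β''(z) = 2·β'(z)² for all z ∈ I if and only if there exist real constants c₁, c₂ such that c₁·z + c₂ > 0 and β(z) = (c₁·z + c₂)⁻¹ for all z ∈ I. -/

import Mathlib

/-- A function with zero derivative on an open convex set is constant there. -/
lemma const_on_of_hasDerivAt_zero {s : Set ℝ} (hs : IsOpen s) (hc : Convex ℝ s)
    (f : ℝ → ℝ) (hf : ∀ x ∈ s, HasDerivAt f 0 x) :
    ∀ x ∈ s, ∀ y ∈ s, f x = f y := by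
  intro x hx y hy
  refine hc.is_const_of_fderivWithin_eq_zero
    (fun z hz => ((hf z hz).differentiableAt).differentiableWithinAt) ?_ hx hy
  intro z hz
  rw [fderivWithin_of_isOpen hs hz]
  have : fderiv ℝ f z = ContinuousLinearMap.smulRight (1 : ℝ →L[ℝ] ℝ) (deriv f z) := by
    rw [← toSpanSingleton_deriv]; ext; simp
  rw [this, (hf z hz).deriv]
  ext; simp

/-- Let `I ⊆ ℝ` be an open interval and let `β : ℝ → ℝ` be twice
differentiable on `I` with `β z > 0` for every `z ∈ I`. Then
`β z * β'' z = 2 * (β' z)^2` for all `z ∈ I` if and only if there exist real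
constants `c₁, c₂` such that `c₁ * z + c₂ > 0` and `β z = (c₁ * z + c₂)⁻¹`
for all `z ∈ I`. -/
theorem stmt0 (I : Set ℝ) (hI : IsOpen I) (hI' : I.OrdConnected)
    (β : ℝ → ℝ)
    (hpos : ∀ z ∈ I, 0 < β z)
    (hdiff : ∀ z ∈ I, DifferentiableAt ℝ β z)
    (hdiff2 : ∀ z ∈ I, DifferentiableAt ℝ (deriv β) z) :
    (∀ z ∈ I, β z * deriv (deriv β) z = 2 * (deriv β z) ^ 2) ↔
      ∃ c₁ c₂ : ℝ, ∀ z ∈ I, 0 < c₁ * z + c₂ ∧ β z = (c₁ * z + c₂)⁻¹ := by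
  have hconv : Convex ℝ I := convex_iff_ordConnected.mpr hI'
  constructor
  · intro hode
    rcases I.eq_empty_or_nonempty with rfl | ⟨z₀, hz₀⟩
    · exact ⟨0, 1, fun z hz => absurd hz (Set.notMem_empty z)⟩
    set g : ℝ → ℝ := fun z => (β z)⁻¹ with hg
    set h : ℝ → ℝ := fun z => -(deriv β z) / (β z) ^ 2 with hh
    have hgd : ∀ z ∈ I, HasDerivAt g (h z) z := fun z hz =>
      ((hdiff z hz).hasDerivAt).inv (hpos z hz).ne'
    have hhd : ∀ z ∈ I, HasDerivAt h 0 z := by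
      intro z hz
      have h1 : HasDerivAt (fun w => -(deriv β w)) (-(deriv (deriv β) z)) z :=
        ((hdiff2 z hz).hasDerivAt).neg
      have h2 : HasDerivAt (fun w => (β w) ^ 2) (2 * β z ^ 1 * deriv β z) z :=
        ((hdiff z hz).hasDerivAt).pow 2
      have hne : (β z) ^ 2 ≠ 0 := pow_ne_zero 2 (hpos z hz).ne'
      have := h1.div h2 hne
      refine HasDerivAt.congr_deriv this ?_
      rw [div_eq_zero_iff]
      left
      linear_combination (-(β z)) * hode z hz
    -- h is constant on I
    have hhc : ∀ x ∈ I, ∀ y ∈ I, h x = h y := const_on_of_hasDerivAt_zero hI hconv h hhd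
    set c₁ : ℝ := h z₀ with hc₁
    set c₂ : ℝ := g z₀ - c₁ * z₀ with hc₂
    refine ⟨c₁, c₂, ?_⟩
    have key : ∀ z ∈ I, g z = c₁ * z + c₂ := by
      have hFd : ∀ z ∈ I, HasDerivAt (fun w => g w - (c₁ * w + c₂)) 0 z := by
        intro z hz
        have : HasDerivAt (fun w => c₁ * w + c₂) c₁ z := by
          simpa using ((hasDerivAt_id z).const_mul c₁).add_const c₂
        have h0 := (hgd z hz).sub this
        rwa [hhc z hz z₀ hz₀, ← hc₁, sub_self] at h0
      intro z hz
      have := const_on_of_hasDerivAt_zero hI hconv _ hFd z hz z₀ hz₀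
      simp only [hc₂] at this ⊢
      linarith [this]
    intro z hz
    have hgz : 0 < g z := inv_pos.mpr (hpos z hz)
    refine ⟨key z hz ▸ hgz, ?_⟩
    rw [← key z hz, hg, inv_inv]
  · rintro ⟨c₁, c₂, hc⟩ z hz
    set L : ℝ → ℝ := fun w => c₁ * w + c₂ with hL
    have hLz : L z ≠ 0 := (hc z hz).1.ne'
    have hLd : ∀ w : ℝ, HasDerivAt L c₁ w := fun w => by
      exact (((hasDerivAt_id w).const_mul c₁).add_const c₂).congr_deriv (mul_one c₁)
    have hmem : I ∈ nhds z := hI.mem_nhds hz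
    have heq : β =ᶠ[nhds z] fun w => (L w)⁻¹ :=
      Filter.eventuallyEq_of_mem hmem (fun w hw => (hc w hw).2)
    -- first derivative
    have hf1 : ∀ w ∈ I, HasDerivAt (fun u => (L u)⁻¹) (-c₁ / (L w) ^ 2) w := fun w hw =>
      (hLd w).inv (hc w hw).1.ne'
    have hd1 : ∀ w ∈ I, deriv β w = -c₁ / (L w) ^ 2 := by
      intro w hw
      have heqw : β =ᶠ[nhds w] fun u => (L u)⁻¹ :=
        Filter.eventuallyEq_of_mem (hI.mem_nhds hw) (fun u hu => (hc u hu).2)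
      rw [heqw.deriv_eq, (hf1 w hw).deriv]
    -- second derivative
    have heq2 : deriv β =ᶠ[nhds z] fun w => -c₁ / (L w) ^ 2 :=
      Filter.eventuallyEq_of_mem hmem hd1
    have hf2 : HasDerivAt (fun w => -c₁ / (L w) ^ 2) (2 * c₁ ^ 2 / (L z) ^ 3) z := by
      have h2 : HasDerivAt (fun w => (L w) ^ 2) (2 * L z ^ 1 * c₁) z := (hLd z).pow 2
      have := (hasDerivAt_const z (-c₁)).div h2 (pow_ne_zero 2 hLz)
      refine HasDerivAt.congr_deriv this ?_
      field_simp
      ring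
    have hd2 : deriv (deriv β) z = 2 * c₁ ^ 2 / (L z) ^ 3 := by
      rw [heq2.deriv_eq, hf2.deriv]
    rw [hd2, hd1 z hz, (hc z hz).2]
    show (L z)⁻¹ * (2 * c₁ ^ 2 / (L z) ^ 3) = 2 * (-c₁ / (L z) ^ 2) ^ 2
    field_simp
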